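/- (Corollary 4.5 for Lebesgue spaces.) Let (X, μ) be a measure space, H a complex Hilbert space, ψ, φ : X → H weakly measurable, and let 1 ≤ p ≤ ∞ with conjugate exponent p̄ (1/p + 1/p̄ = 1). Suppose C_ψ f = (x ↦ ⟨f, ψ_x⟩) ∈ L^p(X, μ) for every f ∈ H and C_φ g = (x ↦ ⟨g, φ_x⟩) ∈ L^{p̄}(X, μ) for every g ∈ H. Then for all f, g ∈ H the function x ↦ ⟨f, ψ_x⟩⟨φ_x, g⟩ is μ-integrable, there is a constant c > 0 such that |∫_X ⟨f, ψ_x⟩⟨φ_x, g⟩ dμ(x)| ≤ c ‖f‖ ‖g‖ for all f, g ∈ H, and hence there exists a bounded operator S_{ψ,φ} on H with ⟨S_{ψ,φ} f, g⟩ = ∫_X ⟨f, ψ_x⟩⟨φ_x, g⟩ dμ(x). -/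

import Mathlib

open MeasureTheory
open scoped ENNReal NNReal

local notation "⟪" x ", " y "⟫" => @inner ℂ _ _ x y

open Filter Topology in
lemma statement9_coeff_bound {X : Type*} [MeasurableSpace X] (μ : Measure X)
    {H : Type*} [NormedAddCommGroup H] [InnerProductSpace ℂ H] [CompleteSpace H]
    (ψ : X → H) (p : ℝ≥0∞) (hp : 1 ≤ p)
    (hψp : ∀ f : H, MemLp (fun x => ⟪ψ x, f⟫) p μ) :
    ∃ C : ℝ, 0 ≤ C ∧ ∀ f : H,
      eLpNorm (fun x => ⟪ψ x, f⟫) p μ ≤ ENNReal.ofReal (C * ‖f‖) := by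
  haveI : Fact (1 ≤ p) := ⟨hp⟩
  let T : H →ₗ[ℂ] Lp ℂ p μ :=
    { toFun := fun f => (hψp f).toLp _
      map_add' := fun f g => by
        rw [← MemLp.toLp_add (hψp f) (hψp g)]
        exact MemLp.toLp_congr _ _
          (Filter.Eventually.of_forall fun x => inner_add_right _ _ _)
      map_smul' := fun c f => by
        simp only [RingHom.id_apply]
        rw [← MemLp.toLp_const_smul c (hψp f)]
        exact MemLp.toLp_congr _ _
          (Filter.Eventually.of_forall fun x => inner_smul_right _ _ _) }
  have hT : Continuous T := by
    apply T.continuous_of_seq_closed_graph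
    intro u f F hu hTu
    have h0 : Tendsto (fun n => ‖T (u n) - F‖) atTop (𝓝 0) :=
      tendsto_iff_norm_sub_tendsto_zero.mp hTu
    have h1 : Tendsto (fun n => eLpNorm (⇑(T (u n)) - ⇑F) p μ) atTop (𝓝 0) := by
      have heq : ∀ n, eLpNorm (⇑(T (u n)) - ⇑F) p μ = ENNReal.ofReal ‖T (u n) - F‖ := by
        intro n
        rw [← eLpNorm_congr_ae (Lp.coeFn_sub (T (u n)) F), Lp.norm_def,
          ENNReal.ofReal_toReal (Lp.eLpNorm_ne_top _)]
      simp_rw [heq]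
      simpa using ENNReal.tendsto_ofReal h0
    have hm : TendstoInMeasure μ (fun n => ⇑(T (u n))) atTop ⇑F :=
      tendstoInMeasure_of_tendsto_eLpNorm (lt_of_lt_of_le zero_lt_one hp).ne'
        (fun n => Lp.aestronglyMeasurable _) (Lp.aestronglyMeasurable F) h1
    obtain ⟨ns, hmono, hns⟩ := hm.exists_seq_tendsto_ae
    have hcoe : ∀ᵐ x ∂μ, ∀ n, (T (u n) : X → ℂ) x = ⟪ψ x, u n⟫ := by
      rw [ae_all_iff]
      intro n
      exact (hψp (u n)).coeFn_toLp
    have hF : ⇑F =ᵐ[μ] fun x => ⟪ψ x, f⟫ := by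
      filter_upwards [hns, hcoe] with x hx hcx
      have h2 : Tendsto (fun i => ⟪ψ x, u (ns i)⟫) atTop (𝓝 (F x)) := by
        have := hx
        simp only [hcx] at this
        exact this
      have h3 : Tendsto (fun i => ⟪ψ x, u (ns i)⟫) atTop (𝓝 ⟪ψ x, f⟫) :=
        Filter.Tendsto.inner tendsto_const_nhds (hu.comp hmono.tendsto_atTop)
      exact tendsto_nhds_unique h2 h3
    exact Lp.ext (hF.trans (hψp f).coeFn_toLp.symm)
  let Tc : H →L[ℂ] Lp ℂ p μ := ⟨T, hT⟩
  refine ⟨‖Tc‖, norm_nonneg _, fun f => ?_⟩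
  have heq : eLpNorm (fun x => ⟪ψ x, f⟫) p μ = ENNReal.ofReal ‖Tc f‖ := by
    rw [Lp.norm_def, ENNReal.ofReal_toReal (Lp.eLpNorm_ne_top _)]
    exact (eLpNorm_congr_ae (hψp f).coeFn_toLp).symm
  rw [heq]
  exact ENNReal.ofReal_le_ofReal (Tc.le_opNorm f)

lemma statement9_conj_memLp {X : Type*} [MeasurableSpace X] {μ : Measure X}
    {F : X → ℂ} {q : ℝ≥0∞} (hF : MemLp F q μ) :
    MemLp (fun x => (starRingEnd ℂ) (F x)) q μ := by
  refine ⟨RCLike.continuous_conj.comp_aestronglyMeasurable hF.1, ?_⟩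
  have : eLpNorm (fun x => (starRingEnd ℂ) (F x)) q μ = eLpNorm F q μ := by
    rw [← eLpNorm_norm (fun x => (starRingEnd ℂ) (F x)), ← eLpNorm_norm F]
    simp only [RCLike.norm_conj]
  rw [this]
  exact hF.2


/-- Corollary 4.5 for Lebesgue spaces: If `C_ψ f ∈ L^p` for every `f` and
`C_φ g ∈ L^p̄` for every `g` (conjugate exponents), then `x ↦ ⟨f, ψ_x⟩⟨φ_x, g⟩` is
integrable for all `f, g`, the form is bounded: `|∫ ⟨f, ψ_x⟩⟨φ_x, g⟩ dμ| ≤ c‖f‖‖g‖`,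
and there is a bounded operator `S_{ψ,φ}` with
`⟨S_{ψ,φ} f, g⟩ = ∫ ⟨f, ψ_x⟩⟨φ_x, g⟩ dμ`. Here `⟨f, ψ_x⟩ = ⟪ψ x, f⟫`,
`⟨φ_x, g⟩ = ⟪g, φ x⟫` and `C_φ g = (x ↦ ⟨g, φ_x⟩) = (x ↦ ⟪φ x, g⟫)`. -/
theorem statement9
    {X : Type*} [MeasurableSpace X] (μ : Measure X)
    {H : Type*} [NormedAddCommGroup H] [InnerProductSpace ℂ H] [CompleteSpace H]
    (ψ φ : X → H)
    (hψmeas : ∀ f : H, Measurable fun x => ⟪ψ x, f⟫)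
    (hφmeas : ∀ f : H, Measurable fun x => ⟪φ x, f⟫)
    (p q : ℝ≥0∞) (hp : 1 ≤ p) (hpq : p⁻¹ + q⁻¹ = 1)
    (hψp : ∀ f : H, MemLp (fun x => ⟪ψ x, f⟫) p μ)
    (hφq : ∀ g : H, MemLp (fun x => ⟪φ x, g⟫) q μ) :
    (∀ f g : H, Integrable (fun x => ⟪ψ x, f⟫ * ⟪g, φ x⟫) μ) ∧
    (∃ c > (0 : ℝ), ∀ f g : H,
      ‖∫ x, ⟪ψ x, f⟫ * ⟪g, φ x⟫ ∂μ‖ ≤ c * ‖f‖ * ‖g‖) ∧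
    ∃ S : H →L[ℂ] H, ∀ f g : H, ⟪g, S f⟫ = ∫ x, ⟪ψ x, f⟫ * ⟪g, φ x⟫ ∂μ := by
  have hq : 1 ≤ q := ENNReal.inv_le_one.mp (le_of_le_of_eq le_add_self hpq)
  have hone : (1 : ℝ≥0∞) / 1 = 1 / p + 1 / q := by
    simpa [one_div] using hpq.symm
  -- Hölder: integrability of products
  have hInt : ∀ A B : X → ℂ, MemLp A p μ → MemLp B q μ →
      Integrable (fun x => A x * B x) μ := by
    intro A B hA hB
    have h := hB.smul hA (hpqr := ENNReal.holderConjugate_iff.mpr hpq)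
    exact (memLp_one_iff_integrable.mp h).congr (Filter.Eventually.of_forall fun x => rfl)
  -- Hölder: norm bound for the integral
  have hBound0 : ∀ A B : X → ℂ, MemLp A p μ → MemLp B q μ →
      ‖∫ x, A x * B x ∂μ‖ ≤ (eLpNorm A p μ).toReal * (eLpNorm B q μ).toReal := by
    intro A B hA hB
    have h1 : ‖∫ x, A x * B x ∂μ‖ ≤ ∫ x, ‖A x * B x‖ ∂μ :=
      norm_integral_le_integral_norm _
    have hABm : AEStronglyMeasurable (fun x => A x * B x) μ := hA.1.mul hB.1
    have h2 : ∫ x, ‖A x * B x‖ ∂μ = (eLpNorm (fun x => A x * B x) 1 μ).toReal := by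
      rw [integral_norm_eq_lintegral_enorm hABm, eLpNorm_one_eq_lintegral_enorm]
    have h3 : eLpNorm (fun x => A x * B x) 1 μ ≤ eLpNorm A p μ * eLpNorm B q μ := by
      have h4 := eLpNorm_smul_le_mul_eLpNorm (𝕜 := ℂ) (f := B) (φ := A) hB.1 hA.1 (hpqr := ENNReal.holderConjugate_iff.mpr hpq)
      refine le_trans (le_of_eq (eLpNorm_congr_ae ?_)) h4
      exact Filter.Eventually.of_forall fun x => rfl
    calc ‖∫ x, A x * B x ∂μ‖ ≤ (eLpNorm (fun x => A x * B x) 1 μ).toReal := by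
          rw [← h2]; exact h1
      _ ≤ (eLpNorm A p μ * eLpNorm B q μ).toReal :=
          ENNReal.toReal_mono (ENNReal.mul_ne_top hA.2.ne hB.2.ne) h3
      _ = (eLpNorm A p μ).toReal * (eLpNorm B q μ).toReal := ENNReal.toReal_mul
  -- coefficient bounds via closed graph
  obtain ⟨Cψ, hCψ0, hCψ⟩ := statement9_coeff_bound μ ψ p hp hψp
  obtain ⟨Cφ, hCφ0, hCφ⟩ := statement9_coeff_bound μ φ q hq hφq
  -- conjugated families
  have hφq' : ∀ g : H, MemLp (fun x => ⟪g, φ x⟫) q μ := fun g =>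
    MemLp.ae_eq
      (Filter.Eventually.of_forall fun x => inner_conj_symm _ _) (statement9_conj_memLp (hφq g))
  have hψp' : ∀ f : H, MemLp (fun x => ⟪f, ψ x⟫) p μ := fun f =>
    MemLp.ae_eq
      (Filter.Eventually.of_forall fun x => inner_conj_symm _ _) (statement9_conj_memLp (hψp f))
  have heLψ : ∀ f : H, (eLpNorm (fun x => ⟪ψ x, f⟫) p μ).toReal ≤ Cψ * ‖f‖ := by
    intro f
    have := ENNReal.toReal_mono ENNReal.ofReal_ne_top (hCψ f)
    rwa [ENNReal.toReal_ofReal (by positivity)] at this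
  have heLφ : ∀ g : H, (eLpNorm (fun x => ⟪g, φ x⟫) q μ).toReal ≤ Cφ * ‖g‖ := by
    intro g
    have heq : eLpNorm (fun x => ⟪g, φ x⟫) q μ = eLpNorm (fun x => ⟪φ x, g⟫) q μ :=
      eLpNorm_congr_ae (Filter.Eventually.of_forall fun x => (inner_conj_symm _ _).symm)
        |>.trans (by
          rw [← eLpNorm_norm (fun x => (starRingEnd ℂ) (⟪φ x, g⟫)),
            ← eLpNorm_norm (fun x => ⟪φ x, g⟫)]
          simp only [RCLike.norm_conj])
    have := ENNReal.toReal_mono ENNReal.ofReal_ne_top (hCφ g)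
    rw [ENNReal.toReal_ofReal (by positivity)] at this
    rw [heq]
    exact this
  have hIntMain : ∀ f g : H, Integrable (fun x => ⟪ψ x, f⟫ * ⟪g, φ x⟫) μ :=
    fun f g => hInt _ _ (hψp f) (hφq' g)
  have hBound : ∀ f g : H,
      ‖∫ x, ⟪ψ x, f⟫ * ⟪g, φ x⟫ ∂μ‖ ≤ (Cψ * Cφ + 1) * ‖f‖ * ‖g‖ := by
    intro f g
    calc ‖∫ x, ⟪ψ x, f⟫ * ⟪g, φ x⟫ ∂μ‖
        ≤ (eLpNorm (fun x => ⟪ψ x, f⟫) p μ).toReal *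
          (eLpNorm (fun x => ⟪g, φ x⟫) q μ).toReal :=
          hBound0 _ _ (hψp f) (hφq' g)
      _ ≤ (Cψ * ‖f‖) * (Cφ * ‖g‖) := by
          apply mul_le_mul (heLψ f) (heLφ g) ENNReal.toReal_nonneg (by positivity)
      _ ≤ (Cψ * Cφ + 1) * ‖f‖ * ‖g‖ := by
          have hfg := mul_nonneg (norm_nonneg f) (norm_nonneg g)
          nlinarith [norm_nonneg f, norm_nonneg g]
  refine ⟨hIntMain, ⟨Cψ * Cφ + 1, by positivity, hBound⟩, ?_⟩
  -- the conjugated integrand, its integrability and bound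
  have hIntConj : ∀ f g : H, Integrable (fun x => ⟪f, ψ x⟫ * ⟪φ x, g⟫) μ :=
    fun f g => hInt _ _ (hψp' f) (hφq g)
  have hconj : ∀ f g : H, ∫ x, ⟪f, ψ x⟫ * ⟪φ x, g⟫ ∂μ =
      (starRingEnd ℂ) (∫ x, ⟪ψ x, f⟫ * ⟪g, φ x⟫ ∂μ) := by
    intro f g
    rw [← integral_conj]
    congr 1
    funext x
    rw [map_mul, inner_conj_symm, inner_conj_symm]
  -- construct the operator
  set c : ℝ := Cψ * Cφ + 1 with hc
  have hc0 : (0:ℝ) ≤ c := by positivity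
  -- linear functional for fixed f
  have hLlin : ∀ f : H, ∃ L : H →L[ℂ] ℂ,
      (∀ g, L g = ∫ x, ⟪f, ψ x⟫ * ⟪φ x, g⟫ ∂μ) ∧ ‖L‖ ≤ c * ‖f‖ := by
    intro f
    let L0 : H →ₗ[ℂ] ℂ :=
      { toFun := fun g => ∫ x, ⟪f, ψ x⟫ * ⟪φ x, g⟫ ∂μ
        map_add' := fun g g' => by
          simp_rw [inner_add_right, mul_add]
          exact integral_add (hIntConj f g) (hIntConj f g')
        map_smul' := fun a g => by
          simp only [inner_smul_right, RingHom.id_apply]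
          simp_rw [mul_left_comm]
          exact integral_const_mul a _ }
    have hL0 : ∀ g, ‖L0 g‖ ≤ (c * ‖f‖) * ‖g‖ := by
      intro g
      have : ‖L0 g‖ = ‖∫ x, ⟪ψ x, f⟫ * ⟪g, φ x⟫ ∂μ‖ := by
        show ‖∫ x, ⟪f, ψ x⟫ * ⟪φ x, g⟫ ∂μ‖ = _
        rw [hconj f g, RCLike.norm_conj]
      rw [this]
      calc ‖∫ x, ⟪ψ x, f⟫ * ⟪g, φ x⟫ ∂μ‖ ≤ c * ‖f‖ * ‖g‖ := hBound f g
        _ = (c * ‖f‖) * ‖g‖ := by ring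
    exact ⟨LinearMap.mkContinuous L0 (c * ‖f‖) hL0, fun g => rfl,
      LinearMap.mkContinuous_norm_le L0 (by positivity) hL0⟩
  choose L hL hLnorm using hLlin
  let Smap : H → H := fun f => (InnerProductSpace.toDual ℂ H).symm (L f)
  have hS : ∀ f g : H, ⟪Smap f, g⟫ = ∫ x, ⟪f, ψ x⟫ * ⟪φ x, g⟫ ∂μ := by
    intro f g
    rw [InnerProductSpace.toDual_symm_apply]
    exact hL f g
  have hSadd : ∀ f f' : H, Smap (f + f') = Smap f + Smap f' := by
    intro f f'
    refine ext_inner_right ℂ fun g => ?_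
    rw [inner_add_left, hS, hS, hS]
    simp_rw [inner_add_left, add_mul]
    exact integral_add (hIntConj f g) (hIntConj f' g)
  have hSsmul : ∀ (a : ℂ) (f : H), Smap (a • f) = a • Smap f := by
    intro a f
    refine ext_inner_right ℂ fun g => ?_
    rw [inner_smul_left, hS, hS]
    simp_rw [inner_smul_left, mul_assoc]
    exact integral_const_mul _ _
  have hSnorm : ∀ f : H, ‖Smap f‖ ≤ c * ‖f‖ := by
    intro f
    have : ‖Smap f‖ = ‖L f‖ := (InnerProductSpace.toDual ℂ H).symm.norm_map (L f)
    rw [this]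
    exact hLnorm f
  let Slin : H →ₗ[ℂ] H := { toFun := Smap, map_add' := hSadd, map_smul' := hSsmul }
  refine ⟨LinearMap.mkContinuous Slin c hSnorm, fun f g => ?_⟩
  show ⟪g, Smap f⟫ = _
  rw [← inner_conj_symm, hS f g, hconj f g, RCLike.conj_conj]
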